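/- Let d ≥ 1, K ≥ 0, and let φ : ℝ^d → ℝ be K-Lipschitz. For t > 0 set ψ_t(y) = ‖y‖²/2 + t·φ(y), w_t(x) = sup_{y ∈ ℝ^d} (⟨x,y⟩ − ψ_t(y)), and for ε > 0 let w^ε_t(x) = ‖x‖²/2 − t·u^ε_t(x), where u^ε_t is the Cole–Hopf function. Then for each fixed t > 0, w^ε_t(x) → w_t(x) as ε → 0⁺ for every x ∈ ℝ^d, and the convergence is uniform on every compact subset of ℝ^d. -/

import Mathlib

open scoped RealInnerProductSpace
open MeasureTheory Real Filter
set_option maxHeartbeats 1000000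
set_option linter.unusedVariables false
noncomputable section

variable {d : ℕ}
local notation "E" => EuclideanSpace ℝ (Fin d)

/-- The Cole–Hopf function. -/
def coleHopf {d : ℕ} (φ : EuclideanSpace ℝ (Fin d) → ℝ) (ε t : ℝ)
    (x : EuclideanSpace ℝ (Fin d)) : ℝ :=
  -ε * Real.log ((2 * Real.pi * ε * t) ^ (-(d : ℝ) / 2) *
    ∫ y : EuclideanSpace ℝ (Fin d),
      Real.exp (-‖x - y‖ ^ 2 / (2 * ε * t) - φ y / ε))

/-- `w_t(x) = sup_y (⟨x,y⟩ − (‖y‖²/2 + t φ(y)))`. -/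
def wFun {d : ℕ} (φ : EuclideanSpace ℝ (Fin d) → ℝ) (t : ℝ)
    (x : EuclideanSpace ℝ (Fin d)) : ℝ :=
  ⨆ y : EuclideanSpace ℝ (Fin d), (⟪x, y⟫ - (‖y‖ ^ 2 / 2 + t * φ y))


lemma integrable_gauss {b : ℝ} (hb : 0 < b) :
    Integrable (fun v : E => Real.exp (-b * ‖v‖^2)) := by
  have h := (GaussianFourier.integrable_cexp_neg_mul_sq_norm_add
    (b := (b : ℂ)) (by simpa using hb) 0 (0 : E)).norm
  refine h.congr (Filter.Eventually.of_forall fun v => ?_)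
  simp [Complex.norm_exp, ← Complex.ofReal_pow]

lemma integrable_exp_lin_quad (c : ℝ) {s : ℝ} (hs : 0 < s) :
    Integrable (fun y : E => Real.exp (c * ‖y‖ - s * ‖y‖^2)) := by
  have hmeas : Continuous (fun y : E => Real.exp (c * ‖y‖ - s * ‖y‖^2)) := by
    continuity
  refine ((integrable_gauss (half_pos hs)).const_mul (Real.exp (c^2/(2*s)))).mono'
    hmeas.aestronglyMeasurable (Filter.Eventually.of_forall fun y => ?_)
  rw [Real.norm_eq_abs, abs_of_nonneg (Real.exp_nonneg _), ← Real.exp_add]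
  apply Real.exp_le_exp.2
  have h2 : 2 * s * (c^2/(2*s)) = c^2 := by field_simp
  nlinarith [sq_nonneg (c - s * ‖y‖), hs, h2]

def gfun {d : ℕ} (φ : EuclideanSpace ℝ (Fin d) → ℝ) (t : ℝ)
    (x y : EuclideanSpace ℝ (Fin d)) : ℝ :=
  ⟪x, y⟫ - (‖y‖ ^ 2 / 2 + t * φ y)

lemma wFun_def (φ : E → ℝ) (t : ℝ) (x : E) :
    wFun φ t x = ⨆ y, gfun φ t x y := rfl

section main
variable {K : ℝ} {φ : EuclideanSpace ℝ (Fin d) → ℝ} {t : ℝ}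
variable (hK : 0 ≤ K) (hLip : ∀ y z, |φ y - φ z| ≤ K * ‖y - z‖) (ht : 0 < t)

include hLip in
lemma phi_cont : Continuous φ := by
  have : LipschitzWith (Real.toNNReal K) φ :=
    LipschitzWith.of_dist_le_mul fun y z => by
      rw [Real.dist_eq, dist_eq_norm]
      calc |φ y - φ z| ≤ K * ‖y - z‖ := hLip y z
        _ ≤ Real.toNNReal K * ‖y - z‖ := by
            gcongr; exact Real.le_coe_toNNReal K
  exact this.continuous

include hLip ht in
lemma g_le {x : E} (y : E) :
    gfun φ t x y ≤ (‖x‖ + t * K) * ‖y‖ - ‖y‖ ^ 2 / 2 - t * φ 0 := by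
  have h1 : ⟪x, y⟫ ≤ ‖x‖ * ‖y‖ := real_inner_le_norm x y
  have h2 : |φ 0 - φ y| ≤ K * ‖y‖ := by simpa using hLip 0 y
  have h3 : φ 0 - φ y ≤ K * ‖y‖ := (abs_le.1 h2).2
  have h4 : t * (φ 0 - φ y) ≤ t * (K * ‖y‖) :=
    mul_le_mul_of_nonneg_left h3 ht.le
  simp only [gfun]; nlinarith

lemma g_cont (hLip : ∀ y z, |φ y - φ z| ≤ K * ‖y - z‖) (x : E) :
    Continuous (gfun φ t x) := by
  have hφ := phi_cont hLip
  unfold gfun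
  exact ((continuous_const.inner continuous_id).sub
    (((continuous_norm.pow 2).div_const 2).add (continuous_const.mul hφ)))

include hLip ht in
lemma integrable_exp_g (x : E) {η : ℝ} (hη : 0 < η) :
    Integrable (fun y : E => Real.exp (gfun φ t x y / η)) := by
  set c := ‖x‖ + t * K with hc
  set a := -(t * φ 0) with ha
  have hmeas : Continuous (fun y : E => Real.exp (gfun φ t x y / η)) :=
    Real.continuous_exp.comp ((g_cont hLip x).div_const η)
  refine ((integrable_exp_lin_quad (c/η) (s := 1/(2*η)) (by positivity)).const_mul
    (Real.exp (a/η))).mono' hmeas.aestronglyMeasurable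
    (Filter.Eventually.of_forall fun y => ?_)
  rw [Real.norm_eq_abs, abs_of_nonneg (Real.exp_nonneg _), ← Real.exp_add]
  apply Real.exp_le_exp.2
  have hb : gfun φ t x y ≤ c * ‖y‖ - ‖y‖ ^ 2 / 2 + a := by
    have := g_le hLip ht (x := x) y; linarith
  have : gfun φ t x y / η ≤ (c * ‖y‖ - ‖y‖ ^ 2 / 2 + a) / η := by gcongr
  refine this.trans (le_of_eq ?_)
  field_simp
  ring

include hLip ht in
lemma J_pos (x : E) {η : ℝ} (hη : 0 < η) :
    0 < ∫ y : E, Real.exp (gfun φ t x y / η) := by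
  rw [integral_pos_iff_support_of_nonneg_ae
    (Filter.Eventually.of_forall fun y => (Real.exp_pos _).le)
    (integrable_exp_g hLip ht x hη)]
  have : Function.support (fun y : E => Real.exp (gfun φ t x y / η)) = Set.univ :=
    Set.eq_univ_of_forall fun y => (Real.exp_pos _).ne'
  rw [this]
  exact isOpen_univ.measure_pos volume Set.univ_nonempty

include hLip ht in
lemma g_bddAbove (x : E) : BddAbove (Set.range (gfun φ t x)) := by
  refine ⟨(‖x‖ + t * K) ^ 2 / 2 - t * φ 0, ?_⟩
  rintro _ ⟨y, rfl⟩
  have h1 := g_le hLip ht (x := x) y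
  have h2 : (‖x‖ + t * K) * ‖y‖ - ‖y‖ ^ 2 / 2 ≤ (‖x‖ + t * K) ^ 2 / 2 := by
    nlinarith [sq_nonneg (‖x‖ + t * K - ‖y‖)]
  linarith

include hLip ht in
lemma g_le_w (x y : E) : gfun φ t x y ≤ wFun φ t x :=
  le_ciSup (g_bddAbove hLip ht x) y

include hLip ht hK in
lemma exists_max {M : ℝ} (x : E) (hx : ‖x‖ ≤ M) :
    ∃ y₀ : E, ‖y₀‖ ≤ 2 * (M + t * K) + 1 ∧ wFun φ t x = gfun φ t x y₀ := by
  set R := 2 * (M + t * K) + 1 with hR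
  have hM : 0 ≤ M := (norm_nonneg x).trans hx
  have hR0 : 0 ≤ R := by positivity
  obtain ⟨y₀, hy₀mem, hy₀max⟩ := (isCompact_closedBall (0 : E) R).exists_isMaxOn
    ⟨0, by simpa using hR0⟩ ((g_cont hLip x).continuousOn)
  have hy₀ : ‖y₀‖ ≤ R := by simpa [Metric.mem_closedBall, dist_zero_right] using hy₀mem
  refine ⟨y₀, hy₀, ?_⟩
  have hglob : ∀ y, gfun φ t x y ≤ gfun φ t x y₀ := by
    intro y
    by_cases hy : ‖y‖ ≤ R
    · exact hy₀max (by simpa [Metric.mem_closedBall, dist_zero_right] using hy)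
    · push_neg at hy
      have h1 := g_le hLip ht (x := x) y
      have h2 : gfun φ t x 0 ≤ gfun φ t x y₀ :=
        hy₀max (by simpa [Metric.mem_closedBall, dist_zero_right] using hR0)
      have h3 : gfun φ t x 0 = -(t * φ 0) := by simp [gfun]
      have hcM : ‖x‖ + t * K ≤ M + t * K := by linarith
      have h4 : (‖x‖ + t * K) * ‖y‖ - ‖y‖ ^ 2 / 2 < 0 := by
        nlinarith [norm_nonneg y, mul_nonneg (mul_nonneg ht.le hK) (norm_nonneg y)]
      linarith
  exact le_antisymm (ciSup_le hglob) (le_ciSup (g_bddAbove hLip ht x) y₀)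

end main

section main2
variable {K : ℝ} {φ : EuclideanSpace ℝ (Fin d) → ℝ} {t : ℝ}
variable (hK : 0 ≤ K) (hLip : ∀ y z, |φ y - φ z| ≤ K * ‖y - z‖) (ht : 0 < t)

include hK hLip ht in
lemma key_bound {M : ℝ} (hM : 0 ≤ M) :
    ∃ C : ℝ, 0 ≤ C ∧ ∀ x : EuclideanSpace ℝ (Fin d), ‖x‖ ≤ M → ∀ η : ℝ, 0 < η → η ≤ 1 →
      |η * Real.log (∫ y : E, Real.exp (gfun φ t x y / η)) - wFun φ t x|
        ≤ C * (η + η * |Real.log η|) := by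
  classical
  set c : ℝ := M + t * K with hcdef
  have hc0 : 0 ≤ c := by positivity
  set R : ℝ := 2 * (M + t * K) + 1 with hRdef
  set L : ℝ := M + (R + 1) + t * K with hLdef
  have hL0 : 0 ≤ L := by positivity
  -- the majorant integral
  set JM : ℝ := ∫ y : E, Real.exp (c * ‖y‖ - ‖y‖ ^ 2 / 2 - t * φ 0) with hJM
  set V₁ : ℝ := (volume (Metric.closedBall (0 : E) 1)).toReal with hV₁
  have hV₁pos : 0 < V₁ := by
    rw [hV₁]
    exact ENNReal.toReal_pos (Metric.measure_closedBall_pos volume _ one_pos).ne'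
      (measure_closedBall_lt_top).ne
  set C1 : ℝ := max (Real.log JM + t * φ 0) 0 with hC1
  set C2 : ℝ := L + |Real.log V₁| + (d : ℝ) with hC2
  have hC10 : 0 ≤ C1 := le_max_right _ _
  have hC20 : 0 ≤ C2 := by positivity
  refine ⟨C1 + C2, by positivity, fun x hx η hη hη1 => ?_⟩
  set J : ℝ → ℝ := fun s => ∫ y : E, Real.exp (gfun φ t x y / s) with hJdef
  set w : ℝ := wFun φ t x with hwdef
  have hJηpos : 0 < J η := J_pos hLip ht x hη
  have hJ1pos : 0 < J 1 := J_pos hLip ht x one_pos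
  have hB : 0 ≤ η * |Real.log η| := by positivity
  -- integrability of the majorant
  have hJMint : Integrable (fun y : E => Real.exp (c * ‖y‖ - ‖y‖ ^ 2 / 2 - t * φ 0)) := by
    have h := (integrable_exp_lin_quad (d := d) c (s := (1:ℝ)/2) (by norm_num)).const_mul
      (Real.exp (-(t * φ 0)))
    refine h.congr (Filter.Eventually.of_forall fun y => ?_)
    show Real.exp (-(t * φ 0)) * Real.exp (c * ‖y‖ - 1 / 2 * ‖y‖ ^ 2) = _
    rw [← Real.exp_add]; ring_nf
  -- upper bound
  have hupper : η * Real.log (J η) - w ≤ C1 * η := by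
    have hJle : J η ≤ Real.exp (w / η - w) * J 1 := by
      have hmono : ∀ y : E, Real.exp (gfun φ t x y / η)
          ≤ Real.exp (w / η - w) * Real.exp (gfun φ t x y / 1) := by
        intro y
        rw [← Real.exp_add]
        apply Real.exp_le_exp.2
        have hgw : gfun φ t x y ≤ w := g_le_w hLip ht x y
        have hkey : gfun φ t x y / η - (w / η - w + gfun φ t x y / 1)
            = (gfun φ t x y - w) * (1 / η - 1) := by field_simp; ring
        have h1 : 1 ≤ 1 / η := one_le_one_div hη hη1
        nlinarith [mul_nonneg (sub_nonneg.2 hgw) (sub_nonneg.2 h1)]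
      calc J η ≤ ∫ y : E, Real.exp (w / η - w) * Real.exp (gfun φ t x y / 1) :=
            integral_mono (integrable_exp_g hLip ht x hη)
              ((integrable_exp_g hLip ht x one_pos).const_mul _) hmono
        _ = Real.exp (w / η - w) * J 1 := integral_const_mul _ _
    have hlog1 : Real.log (J η) ≤ (w / η - w) + Real.log (J 1) := by
      calc Real.log (J η) ≤ Real.log (Real.exp (w / η - w) * J 1) :=
            Real.log_le_log hJηpos hJle
        _ = (w / η - w) + Real.log (J 1) := by
            rw [Real.log_mul (Real.exp_ne_zero _) hJ1pos.ne', Real.log_exp]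
    have hJ1M : J 1 ≤ JM := by
      refine integral_mono (integrable_exp_g hLip ht x one_pos) hJMint fun y => ?_
      apply Real.exp_le_exp.2
      have := g_le hLip ht (x := x) y
      have hxy : ‖x‖ * ‖y‖ ≤ M * ‖y‖ := mul_le_mul_of_nonneg_right hx (norm_nonneg y)
      simp only [div_one]
      nlinarith [norm_nonneg y, mul_le_mul_of_nonneg_right hx (norm_nonneg y)]
    have hw0 : -(t * φ 0) ≤ w := by
      have := g_le_w hLip ht x 0
      simpa [gfun] using this
    have hlogJ1 : Real.log (J 1) ≤ Real.log JM := Real.log_le_log hJ1pos hJ1M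
    have hfin : Real.log (J 1) - w ≤ C1 := by
      have : Real.log (J 1) - w ≤ Real.log JM + t * φ 0 := by linarith
      exact this.trans (le_max_left _ _)
    have hmul : η * Real.log (J η) ≤ η * ((w / η - w) + Real.log (J 1)) :=
      mul_le_mul_of_nonneg_left hlog1 hη.le
    have hsimp : η * ((w / η - w) + Real.log (J 1)) = w + η * (Real.log (J 1) - w) := by
      field_simp; ring
    rw [hsimp] at hmul
    nlinarith [mul_le_mul_of_nonneg_left hfin hη.le]
  -- lower bound
  have hlower : w - η * Real.log (J η) ≤ C2 * (η + η * |Real.log η|) := by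
    obtain ⟨y₀, hy₀R, hwy₀⟩ := exists_max hK hLip ht x hx
    have hball : ∀ y ∈ Metric.closedBall y₀ η, w - L * η ≤ gfun φ t x y := by
      intro y hy
      have hyd : ‖y - y₀‖ ≤ η := by
        rw [Metric.mem_closedBall, dist_eq_norm] at hy; exact hy
      have hyn : ‖y‖ ≤ R + 1 := by
        have h := norm_sub_norm_le y y₀
        linarith
      have hsq : ‖y‖ ^ 2 - ‖y₀‖ ^ 2 ≤ (‖y‖ + ‖y₀‖) * ‖y - y₀‖ := by
        have h := norm_sub_norm_le y y₀
        nlinarith [norm_nonneg y, norm_nonneg y₀]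
      have hA : ⟪x, y₀⟫ - ⟪x, y⟫ ≤ M * η := by
        have h1 : ⟪x, y₀⟫ - ⟪x, y⟫ = ⟪x, y₀ - y⟫ := (inner_sub_right x y₀ y).symm
        have h2 : ⟪x, y₀ - y⟫ ≤ ‖x‖ * ‖y₀ - y‖ := real_inner_le_norm _ _
        have h3 : ‖y₀ - y‖ = ‖y - y₀‖ := norm_sub_rev _ _
        have h4 : ‖x‖ * ‖y₀ - y‖ ≤ M * η := by
          rw [h3]
          exact mul_le_mul hx hyd (norm_nonneg _) hM
        linarith
      have hBq : ‖y‖ ^ 2 / 2 - ‖y₀‖ ^ 2 / 2 ≤ (R + 1) * η := by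
        have h5 : (‖y‖ + ‖y₀‖) * ‖y - y₀‖ ≤ (2 * (R + 1)) * η := by
          apply mul_le_mul (by linarith) hyd (norm_nonneg _) (by positivity)
        nlinarith
      have hC' : t * (φ y - φ y₀) ≤ t * K * η := by
        have h6 : φ y - φ y₀ ≤ K * ‖y - y₀‖ := (abs_le.1 (hLip y y₀)).2
        have h7 : K * ‖y - y₀‖ ≤ K * η := mul_le_mul_of_nonneg_left hyd hK
        calc t * (φ y - φ y₀) ≤ t * (K * η) :=
              mul_le_mul_of_nonneg_left (h6.trans h7) ht.le
          _ = t * K * η := by ring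
      have hC'' : t * φ y - t * φ y₀ ≤ t * K * η := by linarith [hC']
      have hLη : L * η = M * η + (R + 1) * η + t * K * η := by rw [hLdef]; ring
      rw [hwdef, hwy₀]
      simp only [gfun]
      have hgoal : gfun φ t x y₀ - L * η ≤ gfun φ t x y := by
        have hsum := add_le_add (add_le_add hA hBq) hC''
        simp only [gfun]
        ring_nf at hsum hLη ⊢
        linarith [hsum, hLη]
      simpa [gfun] using hgoal
    have hμball : (volume (Metric.closedBall y₀ η)).toReal = η ^ d * V₁ := by
      rw [MeasureTheory.Measure.addHaar_closedBall' volume y₀ hη.le]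
      rw [ENNReal.toReal_mul, ENNReal.toReal_ofReal (by positivity)]
      congr 2
      exact finrank_euclideanSpace_fin
    have hJlow : Real.exp ((w - L * η) / η) * (η ^ d * V₁) ≤ J η := by
      have hstep : Real.exp ((w - L * η) / η) * (volume (Metric.closedBall y₀ η)).toReal
          ≤ ∫ y in Metric.closedBall y₀ η, Real.exp (gfun φ t x y / η) := by
        refine setIntegral_ge_of_const_le_real measurableSet_closedBall
          measure_closedBall_lt_top.ne (fun y hy => ?_)
          (integrable_exp_g hLip ht x hη).integrableOn
        apply Real.exp_le_exp.2
        gcongr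
        exact hball y hy
      have hstep2 : (∫ y in Metric.closedBall y₀ η, Real.exp (gfun φ t x y / η)) ≤ J η :=
        setIntegral_le_integral (integrable_exp_g hLip ht x hη)
          (Filter.Eventually.of_forall fun y => (Real.exp_pos _).le)
      rw [hμball] at hstep
      linarith
    have hloglow : (w - L * η) / η + ((d : ℝ) * Real.log η + Real.log V₁)
        ≤ Real.log (J η) := by
      have hpos : 0 < Real.exp ((w - L * η) / η) * (η ^ d * V₁) := by positivity
      have := Real.log_le_log hpos hJlow
      rwa [Real.log_mul (Real.exp_pos _).ne' (by positivity),
        Real.log_exp, Real.log_mul (by positivity) hV₁pos.ne', Real.log_pow] at this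
    have hmul2 : η * ((w - L * η) / η + ((d : ℝ) * Real.log η + Real.log V₁))
        ≤ η * Real.log (J η) := mul_le_mul_of_nonneg_left hloglow hη.le
    have hsimp2 : η * ((w - L * η) / η + ((d : ℝ) * Real.log η + Real.log V₁))
        = w - L * η + (d : ℝ) * (η * Real.log η) + η * Real.log V₁ := by
      field_simp; ring
    rw [hsimp2] at hmul2
    have e1 : -(η * Real.log η) ≤ η * |Real.log η| := by
      have := neg_abs_le (Real.log η)
      nlinarith [mul_le_mul_of_nonneg_left (neg_abs_le (Real.log η)) hη.le]
    have e2 : -(η * Real.log V₁) ≤ η * |Real.log V₁| := by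
      nlinarith [mul_le_mul_of_nonneg_left (neg_abs_le (Real.log V₁)) hη.le]
    have hd0 : (0:ℝ) ≤ (d : ℝ) := Nat.cast_nonneg d
    nlinarith [mul_nonneg hη.le (abs_nonneg (Real.log η)),
      mul_nonneg hη.le (abs_nonneg (Real.log V₁)),
      mul_nonneg (mul_nonneg hd0 hη.le) (abs_nonneg (Real.log η)),
      mul_nonneg (abs_nonneg (Real.log V₁)) hB, mul_nonneg hL0 hB,
      mul_le_mul_of_nonneg_left e1 hd0]
  have hJr : J η = ∫ y : E, Real.exp (gfun φ t x y / η) := rfl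
  rw [← hJr, abs_le]
  constructor
  · have h1 : C2 * (η + η * |Real.log η|) ≤ (C1 + C2) * (η + η * |Real.log η|) := by
      nlinarith
    linarith
  · have h2 : C1 * η ≤ (C1 + C2) * (η + η * |Real.log η|) := by nlinarith
    linarith

end main2

section main3
variable {K : ℝ} {φ : EuclideanSpace ℝ (Fin d) → ℝ} {t : ℝ}
variable (hK : 0 ≤ K) (hLip : ∀ y z, |φ y - φ z| ≤ K * ‖y - z‖) (ht : 0 < t)

include hLip ht in
lemma coleHopf_formula (x : E) {ε : ℝ} (hε : 0 < ε) :
    ‖x‖ ^ 2 / 2 - t * coleHopf φ ε t x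
      = -((d : ℝ) / 2) * ((ε * t) * Real.log (2 * Real.pi * (ε * t)))
        + (ε * t) * Real.log (∫ y : E, Real.exp (gfun φ t x y / (ε * t))) := by
  have hη : 0 < ε * t := mul_pos hε ht
  have step1 : ∀ y : E, -‖x - y‖ ^ 2 / (2 * ε * t) - φ y / ε
      = gfun φ t x y / (ε * t) + -(‖x‖ ^ 2 / (2 * (ε * t))) := by
    intro y
    have hns : ‖x - y‖ ^ 2 = ‖x‖ ^ 2 - 2 * ⟪x, y⟫ + ‖y‖ ^ 2 := norm_sub_sq_real x y
    simp only [gfun]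
    rw [hns]
    field_simp
    ring
  have step2 : (∫ y : E, Real.exp (-‖x - y‖ ^ 2 / (2 * ε * t) - φ y / ε))
      = (∫ y : E, Real.exp (gfun φ t x y / (ε * t)))
          * Real.exp (-(‖x‖ ^ 2 / (2 * (ε * t)))) := by
    rw [← integral_mul_const]
    congr 1; funext y
    rw [← Real.exp_add, step1 y]
  have hJpos := J_pos hLip ht x hη
  have hrp : (0:ℝ) < (2 * Real.pi * ε * t) ^ (-(d : ℝ) / 2) :=
    Real.rpow_pos_of_pos (by positivity) _
  unfold coleHopf
  rw [step2, Real.log_mul hrp.ne' (by positivity),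
    Real.log_mul hJpos.ne' (Real.exp_ne_zero _), Real.log_exp,
    Real.log_rpow (by positivity)]
  have h2 : 2 * Real.pi * ε * t = 2 * Real.pi * (ε * t) := by ring
  rw [h2]
  field_simp
  ring

include hK hLip ht in
lemma final_bound {M : ℝ} (hM : 0 ≤ M) :
    ∃ C : ℝ, 0 ≤ C ∧ ∀ x : EuclideanSpace ℝ (Fin d), ‖x‖ ≤ M → ∀ ε : ℝ, 0 < ε → ε * t ≤ 1 →
      |(‖x‖ ^ 2 / 2 - t * coleHopf φ ε t x) - wFun φ t x|
        ≤ C * ((ε * t) + (ε * t) * |Real.log (ε * t)|) := by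
  obtain ⟨C, hC0, hC⟩ := key_bound hK hLip ht hM
  have hlog2π : 0 < Real.log (2 * Real.pi) :=
    Real.log_pos (by nlinarith [Real.pi_gt_three])
  refine ⟨C + (d : ℝ) / 2 * (1 + Real.log (2 * Real.pi)), by positivity,
    fun x hx ε hε hεt => ?_⟩
  have hη : 0 < ε * t := mul_pos hε ht
  rw [coleHopf_formula hLip ht x hε]
  have h1 := hC x hx (ε * t) hη hεt
  have h2 : |(-((d : ℝ) / 2)) * ((ε * t) * Real.log (2 * Real.pi * (ε * t)))|
      ≤ ((d : ℝ) / 2 * (1 + Real.log (2 * Real.pi)))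
          * ((ε * t) + (ε * t) * |Real.log (ε * t)|) := by
    rw [abs_mul, abs_mul, Real.log_mul (by positivity) hη.ne']
    have ha : |Real.log (2 * Real.pi) + Real.log (ε * t)|
        ≤ Real.log (2 * Real.pi) + |Real.log (ε * t)| := by
      refine (abs_add_le _ _).trans ?_
      rw [abs_of_nonneg hlog2π.le]
    rw [abs_neg, abs_of_nonneg (by positivity : (0:ℝ) ≤ (d:ℝ)/2),
      abs_of_nonneg hη.le]
    have hd0 : (0:ℝ) ≤ (d : ℝ) / 2 := by positivity
    nlinarith [mul_nonneg hη.le (abs_nonneg (Real.log (ε * t))),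
      mul_nonneg hd0 (mul_nonneg hη.le (abs_nonneg (Real.log (ε * t)))),
      mul_nonneg (mul_nonneg hd0 hlog2π.le)
        (mul_nonneg hη.le (abs_nonneg (Real.log (ε * t)))),
      mul_le_mul_of_nonneg_left (mul_le_mul_of_nonneg_left ha hη.le) hd0]
  have habs : |(-((d : ℝ) / 2) * ((ε * t) * Real.log (2 * Real.pi * (ε * t)))
      + (ε * t) * Real.log (∫ y : E, Real.exp (gfun φ t x y / (ε * t))))
      - wFun φ t x|
      ≤ |(-((d : ℝ) / 2)) * ((ε * t) * Real.log (2 * Real.pi * (ε * t)))|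
        + |(ε * t) * Real.log (∫ y : E, Real.exp (gfun φ t x y / (ε * t)))
            - wFun φ t x| := by
    rw [add_sub_assoc]
    exact abs_add_le _ _
  nlinarith [habs, h1, h2]

include ht in
lemma bound_tendsto (C : ℝ) :
    Filter.Tendsto (fun ε : ℝ => C * ((ε * t) + (ε * t) * |Real.log (ε * t)|))
      (nhdsWithin 0 (Set.Ioi 0)) (nhds 0) := by
  have hmap : Filter.Tendsto (fun ε : ℝ => ε * t)
      (nhdsWithin 0 (Set.Ioi 0)) (nhdsWithin 0 (Set.Ioi 0)) := by
    rw [tendsto_nhdsWithin_iff]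
    constructor
    · have h := (continuous_mul_right t).tendsto (0 : ℝ)
      simpa using h.mono_left nhdsWithin_le_nhds
    · exact eventually_nhdsWithin_of_forall fun ε hε => mul_pos hε ht
  have habs : Filter.Tendsto (fun η : ℝ => η + η * |Real.log η|)
      (nhdsWithin 0 (Set.Ioi 0)) (nhds 0) := by
    have h1 : Filter.Tendsto (fun η : ℝ => η * Real.log η) (nhds 0) (nhds 0) := by
      have := Real.continuous_mul_log.tendsto 0
      simpa using this
    have h2 : Filter.Tendsto (fun η : ℝ => |η * Real.log η|)
        (nhdsWithin 0 (Set.Ioi 0)) (nhds 0) := by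
      have := h1.abs
      simpa using this.mono_left nhdsWithin_le_nhds
    have h3 : (fun η : ℝ => η + η * |Real.log η|)
        =ᶠ[nhdsWithin 0 (Set.Ioi 0)] fun η => η + |η * Real.log η| :=
      eventually_nhdsWithin_of_forall fun η hη => by
        show η + η * |Real.log η| = η + |η * Real.log η|
        rw [abs_mul, abs_of_pos (a := η) hη]
    rw [Filter.tendsto_congr' h3]
    have h4 : Filter.Tendsto (fun η : ℝ => η) (nhdsWithin 0 (Set.Ioi 0)) (nhds 0) :=
      Filter.tendsto_id.mono_right nhdsWithin_le_nhds
    simpa using h4.add h2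
  have := (habs.comp hmap).const_mul C
  simpa [Function.comp] using this

end main3

theorem stmt7 (d : ℕ) (hd : 1 ≤ d) (K : ℝ) (hK : 0 ≤ K)
    (φ : EuclideanSpace ℝ (Fin d) → ℝ)
    (hLip : ∀ y z, |φ y - φ z| ≤ K * ‖y - z‖)
    (t : ℝ) (ht : 0 < t) :
    (∀ x : EuclideanSpace ℝ (Fin d),
      Filter.Tendsto (fun ε : ℝ => ‖x‖ ^ 2 / 2 - t * coleHopf φ ε t x)
        (nhdsWithin 0 (Set.Ioi 0)) (nhds (wFun φ t x))) ∧
    (∀ Kc : Set (EuclideanSpace ℝ (Fin d)), IsCompact Kc →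
      TendstoUniformlyOn (fun ε : ℝ => fun x => ‖x‖ ^ 2 / 2 - t * coleHopf φ ε t x)
        (wFun φ t) (nhdsWithin 0 (Set.Ioi 0)) Kc) := by
  have hmapn : Filter.Tendsto (fun ε : ℝ => ε * t)
      (nhdsWithin 0 (Set.Ioi 0)) (nhds 0) := by
    have h := (continuous_mul_right t).tendsto (0 : ℝ)
    simpa using h.mono_left nhdsWithin_le_nhds
  have hev1 : ∀ᶠ ε in nhdsWithin (0:ℝ) (Set.Ioi 0), ε * t < 1 :=
    hmapn.eventually_lt_const one_pos
  constructor
  · intro x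
    obtain ⟨C, hC0, hC⟩ := final_bound hK hLip ht (norm_nonneg x)
    have hb : ∀ᶠ ε in nhdsWithin (0:ℝ) (Set.Ioi 0),
        |(‖x‖ ^ 2 / 2 - t * coleHopf φ ε t x) - wFun φ t x|
          ≤ C * ((ε * t) + (ε * t) * |Real.log (ε * t)|) := by
      filter_upwards [hev1, self_mem_nhdsWithin] with ε h1 h2
      exact hC x le_rfl ε h2 h1.le
    have h0 : Filter.Tendsto
        (fun ε : ℝ => |(‖x‖ ^ 2 / 2 - t * coleHopf φ ε t x) - wFun φ t x|)
        (nhdsWithin 0 (Set.Ioi 0)) (nhds 0) :=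
      squeeze_zero' (Filter.Eventually.of_forall fun ε => abs_nonneg _) hb
        (bound_tendsto ht C)
    rw [tendsto_iff_dist_tendsto_zero]
    have heq : (fun ε : ℝ => dist (‖x‖ ^ 2 / 2 - t * coleHopf φ ε t x) (wFun φ t x))
        = fun ε : ℝ => |(‖x‖ ^ 2 / 2 - t * coleHopf φ ε t x) - wFun φ t x| := by
      funext ε; rw [Real.dist_eq]
    rw [heq]
    exact h0
  · intro Kc hKc
    obtain ⟨r, hr⟩ := hKc.isBounded.subset_closedBall 0
    set M : ℝ := max r 0 with hM
    obtain ⟨C, hC0, hC⟩ := final_bound hK hLip ht (le_max_right r 0)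
    rw [Metric.tendstoUniformlyOn_iff]
    intro δ hδ
    filter_upwards [hev1, self_mem_nhdsWithin,
      (bound_tendsto ht C).eventually_lt_const hδ] with ε h1 h2 h3
    intro x hx
    have hxM : ‖x‖ ≤ M := by
      have h := hr hx
      rw [Metric.mem_closedBall, dist_zero_right] at h
      exact h.trans (le_max_left r 0)
    have hbd := hC x hxM ε h2 h1.le
    rw [Real.dist_eq, abs_sub_comm]
    exact lt_of_le_of_lt hbd h3
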